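/- Let F = (X; f₁,…,f_N) and G = (Y; g₁,…,g_N) be point-fibred IFSs on compact Hausdorff spaces X and Y with attractors A_F, A_G and coding maps π_F, π_G : I^∞ → A_F, A_G respectively, let τ_F : A_F → Ω_F be a section of π_F, and let T_FG = π_G ∘ τ_F : A_F → A_G be the associated fractal transformation. If for all σ, ω in the closure of Ω_F in I^∞, π_F(σ) = π_F(ω) implies π_G(σ) = π_G(ω), then T_FG is continuous. -/

import Mathlib

open Set Topology Filter

/-- `seqComp f σ k` is the composition `f_{σ|k} = f_{σ₁} ∘ f_{σ₂} ∘ ⋯ ∘ f_{σ_k}`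
(with the sequence `σ` indexed from `0`). -/
def seqComp {X : Type*} {N : ℕ} (f : Fin N → X → X) (σ : ℕ → Fin N) : ℕ → X → X
  | 0 => id
  | k + 1 => seqComp f σ k ∘ f (σ k)

/-- `PiMap f σ = ⋂_{k ≥ 1} f_{σ₁} ∘ ⋯ ∘ f_{σ_k}(X)`. -/
def PiMap {X : Type*} {N : ℕ} (f : Fin N → X → X) (σ : ℕ → Fin N) : Set X :=
  ⋂ k : ℕ, seqComp f σ (k + 1) '' Set.univ

lemma seqComp_congr {X : Type*} {N : ℕ} (f : Fin N → X → X) {σ ω : ℕ → Fin N} :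
    ∀ k, (∀ j < k, σ j = ω j) → seqComp f σ k = seqComp f ω k
  | 0, _ => rfl
  | k+1, h => by
    simp only [seqComp, seqComp_congr f k (fun j hj => h j (Nat.lt_succ_of_lt hj)),
      h k (Nat.lt_succ_self k)]

lemma seqComp_continuous {X : Type*} [TopologicalSpace X] {N : ℕ} (f : Fin N → X → X)
    (hf : ∀ i, Continuous (f i)) (σ : ℕ → Fin N) : ∀ k, Continuous (seqComp f σ k)
  | 0 => continuous_id
  | k+1 => (seqComp_continuous f hf σ k).comp (hf (σ k))

lemma coding_continuous {X : Type*} [TopologicalSpace X] [CompactSpace X] [T2Space X]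
    {N : ℕ} (f : Fin N → X → X) (hf : ∀ i, Continuous (f i))
    (πF : (ℕ → Fin N) → X) (hπF : ∀ σ, PiMap f σ = {πF σ}) : Continuous πF := by
  rw [continuous_iff_continuousAt]
  intro σ
  intro U hU
  rcases mem_nhds_iff.mp hU with ⟨V, hVU, hVopen, hVmem⟩
  set K : ℕ → Set X := fun k => seqComp f σ (k + 1) '' Set.univ with hK
  have hKc : ∀ k, IsCompact (K k) := fun k =>
    isCompact_univ.image (seqComp_continuous f hf σ (k+1))
  have hanti : Antitone K := by
    apply antitone_nat_of_succ_le
    intro k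
    have : seqComp f σ (k + 2) = seqComp f σ (k + 1) ∘ f (σ (k + 1)) := rfl
    rw [hK]
    simp only
    rw [this, Set.image_comp]
    exact Set.image_mono (Set.subset_univ _)
  have hdir : Directed (· ⊇ ·) K := hanti.directed_ge
  have hiK : (⋂ k, K k) = {πF σ} := hπF σ
  have hsub : ∀ x ∈ ⋂ k, K k, V ∈ 𝓝 x := by
    intro x hx
    rw [hiK] at hx
    rw [hx]
    exact hVopen.mem_nhds hVmem
  obtain ⟨k, hk⟩ := exists_subset_nhds_of_isCompact' hdir hKc
    (fun k => (hKc k).isClosed) hsub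
  -- cylinder neighborhood
  have hcyl : {ω : ℕ → Fin N | ∀ j < k + 1, ω j = σ j} ∈ 𝓝 σ := by
    have : {ω : ℕ → Fin N | ∀ j < k + 1, ω j = σ j}
        = ⋂ j ∈ Finset.range (k+1), {ω : ℕ → Fin N | ω j = σ j} := by
      ext ω; simp [Finset.mem_range]
    rw [this]
    refine (Filter.biInter_mem (Finset.range (k+1)).finite_toSet).mpr ?_
    intro j _
    have : IsOpen ((fun ω : ℕ → Fin N => ω j) ⁻¹' ({σ j} : Set (Fin N))) :=
      (continuous_apply j).isOpen_preimage _ (isOpen_discrete _)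
    exact this.mem_nhds rfl
  rw [Filter.mem_map]
  refine Filter.mem_of_superset hcyl ?_
  intro ω hω
  have hωK : πF ω ∈ K k := by
    show πF ω ∈ seqComp f σ (k+1) '' Set.univ
    have h1 : πF ω ∈ PiMap f ω := by rw [hπF ω]; exact rfl
    have h2 : πF ω ∈ seqComp f ω (k+1) '' Set.univ := Set.mem_iInter.mp h1 k
    rwa [seqComp_congr f (k+1) (fun j hj => hω j hj)] at h2
  exact hVU (hk hωK)

/-- Let `F` and `G` be point-fibred IFSs on compact Hausdorff spaces
`X`, `Y` with coding maps `π_F`, `π_G` and attractors `A_F = range π_F`,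
`A_G = range π_G`, let `τ_F : A_F → Ω_F` be a section of `π_F`, and let
`T_FG = π_G ∘ τ_F`. If for all `σ, ω` in the closure of `Ω_F`,
`π_F σ = π_F ω → π_G σ = π_G ω`, then `T_FG` is continuous. -/
theorem fractalTransformation_continuous
    {X : Type*} [TopologicalSpace X] [CompactSpace X] [T2Space X] [Nonempty X]
    {Y : Type*} [TopologicalSpace Y] [CompactSpace Y] [T2Space Y] [Nonempty Y]
    {N : ℕ} (f : Fin N → X → X) (hf : ∀ i, Continuous (f i))
    (g : Fin N → Y → Y) (hg : ∀ i, Continuous (g i))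
    (πF : (ℕ → Fin N) → X) (hπF : ∀ σ, PiMap f σ = {πF σ})
    (πG : (ℕ → Fin N) → Y) (hπG : ∀ σ, PiMap g σ = {πG σ})
    -- `Ω_F` is an address space for `F` with section `τ_F`:
    (ΩF : Set (ℕ → Fin N)) (hΩF : πF '' ΩF = Set.range πF) (hinjF : Set.InjOn πF ΩF)
    (τF : Set.range πF → ΩF) (hτF : ∀ x : Set.range πF, πF (τF x) = (x : X))
    -- the compatibility hypothesis on the closure of `Ω_F`:
    (hcomp : ∀ σ ∈ closure ΩF, ∀ ω ∈ closure ΩF, πF σ = πF ω → πG σ = πG ω) :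
    Continuous (fun x : Set.range πF =>
      (⟨πG (τF x), Set.mem_range_self ((τF x : ℕ → Fin N))⟩ : Set.range πG)) := by
  have hπFc := coding_continuous f hf πF hπF
  have hπGc := coding_continuous g hg πG hπG
  set T : Set.range πF → Set.range πG := fun x =>
    ⟨πG (τF x), Set.mem_range_self ((τF x : ℕ → Fin N))⟩ with hT
  haveI : CompactSpace (closure ΩF) :=
    isCompact_iff_compactSpace.mp (isClosed_closure.isCompact)
  let q : closure ΩF → Set.range πF := fun σ => ⟨πF σ, Set.mem_range_self _⟩
  have hqc : Continuous q := (hπFc.comp continuous_subtype_val).subtype_mk _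
  have hqs : Function.Surjective q := by
    rintro ⟨x, σ, rfl⟩
    have : πF σ ∈ πF '' ΩF := hΩF ▸ Set.mem_range_self σ
    obtain ⟨ω, hω, hωx⟩ := this
    exact ⟨⟨ω, subset_closure hω⟩, Subtype.ext hωx⟩
  have hq : Topology.IsQuotientMap q := hqc.isClosedMap.isQuotientMap hqc hqs
  rw [hq.continuous_iff]
  have heq : (T ∘ q) = fun σ : closure ΩF => ⟨πG σ, Set.mem_range_self _⟩ := by
    funext σ
    apply Subtype.ext
    exact hcomp _ (subset_closure (τF (q σ)).2) _ σ.2 (hτF (q σ))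
  rw [heq]
  exact (hπGc.comp continuous_subtype_val).subtype_mk _
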